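/- Let X be an infinite subset of Zar(F) and let x ∈ F. If x lies in the maximal ideal 𝔪_V for all but finitely many valuation rings V in X, then x ∈ 𝔪_U for every patch limit point U of X. -/

import Mathlib

open Set

/-- A subring `V` of a field `F` is a valuation ring of `F` (with quotient field `F`). -/
def IsValSubring (F : Type*) [Field F] (V : Subring F) : Prop :=
  ∀ t : F, t ≠ 0 → t ∈ V ∨ t⁻¹ ∈ V

/-- The Zariski-Riemann space of the field `F`: the set of valuation rings of `F`. -/
def Zar (F : Type*) [Field F] : Type _ := {V : Subring F // IsValSubring F V}

/-- The patch (constructible) topology on `Zar F`, generated by the sets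
`{V : x ∈ V}` and `{V : y ∉ V}` for `x, y ∈ F`. -/
instance Zar.patchTopology (F : Type*) [Field F] : TopologicalSpace (Zar F) :=
  TopologicalSpace.generateFrom
    ({S | ∃ x : F, S = {V : Zar F | x ∈ V.1}} ∪ {S | ∃ y : F, S = {V : Zar F | y ∉ V.1}})

variable {F : Type*} [Field F]

/-- The maximal ideal of a valuation ring of `F`, as a subset of `F`. -/
def mIdeal (V : Zar F) : Set F := {x : F | x ∈ V.1 ∧ (x = 0 ∨ x⁻¹ ∉ V.1)}

/-- `A(X)`: the intersection of the valuation rings in `X`, as a subset of `F`. -/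
def aSet (X : Set (Zar F)) : Set F := ⋂ V ∈ X, ((V : Zar F).1 : Set F)

/-- `A(X)` as a subring of `F`. -/
def ASub (X : Set (Zar F)) : Subring F := ⨅ V ∈ X, (V : Zar F).1

/-- `J(X)`: the intersection of the maximal ideals of the valuation rings in `X`. -/
def jSet (X : Set (Zar F)) : Set F := ⋂ V ∈ X, mIdeal V

/-- The set of limit points of `X` in the patch topology of `Zar F`. -/
def limPts (X : Set (Zar F)) : Set (Zar F) :=
  {V : Zar F | ∀ U : Set (Zar F), IsOpen U → V ∈ U → ∃ W ∈ X, W ≠ V ∧ W ∈ U}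



lemma zar_open_mem (t : F) : IsOpen {V : Zar F | t ∈ V.1} :=
  TopologicalSpace.GenerateOpen.basic _ (Or.inl ⟨t, rfl⟩)

lemma zar_open_nmem (t : F) : IsOpen {V : Zar F | t ∉ V.1} :=
  TopologicalSpace.GenerateOpen.basic _ (Or.inr ⟨t, rfl⟩)

lemma zar_sep (U W : Zar F) (hne : W ≠ U) :
    ∃ O : Set (Zar F), IsOpen O ∧ U ∈ O ∧ W ∉ O := by
  have h1 : ¬ ∀ t : F, t ∈ U.1 ↔ t ∈ W.1 := by
    intro h'
    exact hne (Subtype.ext (Subring.ext fun t => (h' t).symm))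
  push_neg at h1
  obtain ⟨t, ht⟩ := h1
  rcases ht with ⟨htU, htW⟩ | ⟨htU, htW⟩
  · exact ⟨_, zar_open_mem t, htU, fun hw => htW hw⟩
  · exact ⟨_, zar_open_nmem t, htU, fun hw => hw htW⟩

theorem stmt3 (X : Set (Zar F)) (hX : X.Infinite) (x : F)
    (h : {V ∈ X | x ∉ mIdeal V}.Finite) :
    ∀ U ∈ limPts X, x ∈ mIdeal U := by
  intro U hU
  by_contra hx
  have hx0 : x ≠ 0 := by
    rintro rfl
    exact hx ⟨U.1.zero_mem, Or.inl rfl⟩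
  obtain ⟨O, hOopen, hUO, hOsub⟩ :
      ∃ O : Set (Zar F), IsOpen O ∧ U ∈ O ∧ ∀ V ∈ O, x ∉ mIdeal V := by
    rcases not_and_or.mp hx with h1 | h2
    · exact ⟨_, zar_open_nmem x, h1, fun V hV hm => hV hm.1⟩
    · push_neg at h2
      exact ⟨_, zar_open_mem x⁻¹, h2.2, fun V hV hm => (hm.2.resolve_left hx0) hV⟩
  set S := {V ∈ X | x ∉ mIdeal V} with hSdef
  have hS' : (S \ {U}).Finite := h.diff
  have hsep : ∀ W ∈ S \ {U}, ∃ O', IsOpen O' ∧ U ∈ O' ∧ W ∉ O' := fun W hW =>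
    zar_sep U W hW.2
  choose! O' hO using hsep
  have hGopen : IsOpen (O ∩ ⋂ W ∈ S \ {U}, O' W) :=
    hOopen.inter (hS'.isOpen_biInter fun W hW => (hO W hW).1)
  have hUG : U ∈ O ∩ ⋂ W ∈ S \ {U}, O' W :=
    ⟨hUO, mem_iInter₂.mpr fun W hW => (hO W hW).2.1⟩
  obtain ⟨W, hWX, hWU, hWG⟩ := hU _ hGopen hUG
  have hWS' : W ∈ S \ {U} := ⟨⟨hWX, hOsub W hWG.1⟩, hWU⟩
  exact (hO W hWS').2.2 (mem_iInter₂.mp hWG.2 W hWS')
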